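/- arXiv:2311.18754 — 2 statements merged into one kernel-verified Lean document; each statement's English description precedes it below -/
import Mathlib

section
/- If a real-analytic function F : V → ℝ on an open subset V of ℂᵐ can be written as F = ∑_j |h_j|² for holomorphic functions h_j : V → ℂ (with locally uniform convergence), then e^F − 1 can also be written as a convergent sum ∑_k |k_j|² of moduli squared of holomorphic functions on V, where one may take the k_j to be the normalized monomials in the h_j arising from the exponential series: e^F = ∑_{multi-indices α} |h^α|²/α!. -/
open Finset

/-- Product of two nonnegative real `HasSum`s over the product index type. -/
lemma myHasSum_mul_nonneg {β γ : Type*} {f : β → ℝ} {g : γ → ℝ} {s t : ℝ}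
    (hf : HasSum f s) (hg : HasSum g t) (h0f : ∀ b, 0 ≤ f b) (h0g : ∀ c, 0 ≤ g c) :
    HasSum (fun p : β × γ => f p.1 * g p.2) (s * t) := by
  have hsum : Summable (fun p : β × γ => f p.1 * g p.2) :=
    hf.summable.mul_of_nonneg hg.summable h0f h0g
  have hmul := hf.mul_eq hg hsum.hasSum
  rw [hmul]
  exact hsum.hasSum

set_option maxHeartbeats 1000000 in
/-- Fubini for finitely many nonnegative series indexed by `Fin n`. -/
lemma myHasSum_pi_fin : ∀ (n : ℕ) (f : Fin n → ℕ → ℝ) (t : Fin n → ℝ),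
    (∀ i k, 0 ≤ f i k) → (∀ i, HasSum (f i) (t i)) →
    HasSum (fun p : Fin n → ℕ => ∏ i, f i (p i)) (∏ i, t i) := by
  intro n
  induction n with
  | zero =>
    intro f t _ _
    simp only [Finset.univ_eq_empty, Finset.prod_empty]
    have : HasSum (fun _ : Fin 0 → ℕ => (1 : ℝ))
        ((fun _ : Fin 0 → ℕ => (1 : ℝ)) (fun _ => 0)) :=
      hasSum_single (f := fun _ : Fin 0 → ℕ => (1 : ℝ)) (fun _ => 0)
        (fun b hb => absurd (Subsingleton.elim b _) hb)
    simpa using this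
  | succ n ih =>
    intro f t h0 ht
    have ihs := ih (fun i => f i.succ) (fun i => t i.succ) (fun i _ => h0 _ _) (fun i => ht _)
    have key : HasSum (fun q : ℕ × (Fin n → ℕ) => f 0 q.1 * ∏ i : Fin n, f i.succ (q.2 i))
        (t 0 * ∏ i : Fin n, t i.succ) :=
      myHasSum_mul_nonneg (f := f 0) (g := fun p : Fin n → ℕ => ∏ i : Fin n, f i.succ (p i))
        (ht 0) ihs (fun b => h0 0 b)
        (fun q => Finset.prod_nonneg fun i _ => h0 _ _)
    rw [Fin.prod_univ_succ t]
    refine (Equiv.hasSum_iff (Fin.consEquiv fun _ : Fin (n + 1) => ℕ)).mp ?_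
    have heq : ((fun p : Fin (n + 1) → ℕ => ∏ i, f i (p i)) ∘ (Fin.consEquiv fun _ : Fin (n + 1) => ℕ))
        = fun q : ℕ × (Fin n → ℕ) => f 0 q.1 * ∏ i : Fin n, f i.succ (q.2 i) := by
      funext q
      simp [Fin.prod_univ_succ]
    rw [heq]
    exact key

/-- Fubini for finitely many nonnegative series indexed by a `Fintype`. -/
lemma myHasSum_pi_fintype {ι : Type*} [Fintype ι] (f : ι → ℕ → ℝ) (t : ι → ℝ)
    (h0 : ∀ i k, 0 ≤ f i k) (ht : ∀ i, HasSum (f i) (t i)) :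
    HasSum (fun p : ι → ℕ => ∏ i, f i (p i)) (∏ i, t i) := by
  classical
  obtain ⟨eqv⟩ : Nonempty (ι ≃ Fin (Fintype.card ι)) := ⟨Fintype.equivFin ι⟩
  have base := myHasSum_pi_fin (Fintype.card ι) (fun j => f (eqv.symm j))
      (fun j => t (eqv.symm j)) (fun j k => h0 _ _) (fun j => ht _)
  have hprod : (∏ j, t (eqv.symm j)) = ∏ i, t i := Equiv.prod_comp eqv.symm t
  rw [← hprod]
  refine (Equiv.hasSum_iff (Equiv.arrowCongr eqv.symm (Equiv.refl ℕ))).mp ?_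
  have heq : ((fun p : ι → ℕ => ∏ i, f i (p i)) ∘ (Equiv.arrowCongr eqv.symm (Equiv.refl ℕ)))
      = fun q : Fin (Fintype.card ι) → ℕ => ∏ j, f (eqv.symm j) (q j) := by
    funext q
    simp only [Function.comp_apply, Equiv.arrowCongr_apply, Equiv.refl_apply, Equiv.symm_symm,
      Function.comp]
    rw [← Equiv.prod_comp eqv.symm (fun i => f i (q (eqv i)))]
    exact Finset.prod_congr rfl fun j _ => by rw [Equiv.apply_symm_apply]
  rw [heq]
  exact base

/-- The key combinatorial identity: if `x : ℕ → ℝ` is nonnegative with `HasSum x A`,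
then `exp A = ∑ over finitely supported multi-indices α of ∏ x j ^ α j / (α j)!`. -/
lemma myKey_hasSum (x : ℕ → ℝ) (hx : ∀ j, 0 ≤ x j) {A : ℝ} (hA : HasSum x A) :
    HasSum (fun α : ℕ →₀ ℕ => ∏ j ∈ α.support, (x j ^ α j / (α j).factorial : ℝ))
      (Real.exp A) := by
  classical
  set f : ℕ → ℕ → ℝ := fun j n => x j ^ n / n.factorial with hfdef
  have hf0 : ∀ j n, 0 ≤ f j n := fun j n =>
    div_nonneg (pow_nonneg (hx j) n) (by positivity)
  have hf1 : ∀ j, f j 0 = 1 := fun j => by simp [f]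
  have hfe : ∀ j, HasSum (f j) (Real.exp (x j)) := by
    intro j
    have := NormedSpace.expSeries_div_hasSum_exp (x j)
    rwa [← Real.exp_eq_exp_ℝ] at this
  set g : (ℕ →₀ ℕ) → ℝ := fun α => ∏ j ∈ α.support, f j (α j) with hgdef
  have hg0 : ∀ α, 0 ≤ g α := fun α => Finset.prod_nonneg fun j _ => hf0 _ _
  have hgS : ∀ (S : Finset ℕ) (α : ℕ →₀ ℕ), α.support ⊆ S → g α = ∏ j ∈ S, f j (α j) := by
    intro S α hsub
    exact Finset.prod_subset hsub fun j _ hj => by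
      rw [Finsupp.notMem_support_iff.mp hj, hf1]
  have hPS : ∀ S : Finset ℕ,
      HasSum (fun p : ↥S → ℕ => ∏ j : ↥S, f ↑j (p j)) (Real.exp (∑ j ∈ S, x j)) := by
    intro S
    have := myHasSum_pi_fintype (fun j : ↥S => f ↑j) (fun j : ↥S => Real.exp (x ↑j))
      (fun j k => hf0 _ _) (fun j => hfe _)
    rwa [Finset.prod_coe_sort S (fun j => Real.exp (x j)), ← Real.exp_sum] at this
  apply hasSum_of_isLUB_of_nonneg _ hg0
  constructor
  · rintro r ⟨s, rfl⟩
    set S : Finset ℕ := s.sup Finsupp.support with hS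
    have hsub : ∀ α ∈ s, α.support ⊆ S := fun α hα => Finset.le_sup hα
    have hinj : ∀ α ∈ s, ∀ β ∈ s,
        (fun j : ↥S => α ↑j) = (fun j : ↥S => β ↑j) → α = β := by
      intro α hα β hβ hfun
      ext j
      by_cases hj : j ∈ S
      · exact congrFun hfun ⟨j, hj⟩
      · rw [Finsupp.notMem_support_iff.mp fun hmem => hj (hsub α hα hmem),
          Finsupp.notMem_support_iff.mp fun hmem => hj (hsub β hβ hmem)]
    calc ∑ α ∈ s, g α
        = ∑ α ∈ s, ∏ j : ↥S, f ↑j (α ↑j) := by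
          refine Finset.sum_congr rfl fun α hα => ?_
          rw [hgS S α (hsub α hα), ← Finset.prod_coe_sort S (fun j => f j (α j))]
      _ = ∑ p ∈ s.image (fun α (j : ↥S) => α ↑j), ∏ j : ↥S, f ↑j (p j) :=
          (Finset.sum_image (f := fun p : ↥S → ℕ => ∏ j : ↥S, f ↑j (p j)) hinj).symm
      _ ≤ Real.exp (∑ j ∈ S, x j) :=
          sum_le_hasSum _ (fun p _ => Finset.prod_nonneg fun j _ => hf0 _ _) (hPS S)
      _ ≤ Real.exp A :=
          Real.exp_le_exp.mpr (sum_le_hasSum S (fun j _ => hx j) hA)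
  · intro b hb
    have hball : ∀ s : Finset (ℕ →₀ ℕ), ∑ α ∈ s, g α ≤ b := fun s => hb ⟨s, rfl⟩
    have hSb : ∀ S : Finset ℕ, Real.exp (∑ j ∈ S, x j) ≤ b := by
      intro S
      refine hasSum_le_of_sum_le (hPS S) fun T => ?_
      set ι : (↥S → ℕ) → (ℕ →₀ ℕ) := fun p =>
        Finsupp.embDomain (Function.Embedding.subtype _) (Finsupp.equivFunOnFinite.symm p)
        with hι
      have hι_supp : ∀ p, (ι p).support ⊆ S := by
        intro p j hj
        rw [hι, Finsupp.support_embDomain, Finset.mem_map] at hj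
        obtain ⟨a, -, rfl⟩ := hj
        exact a.2
      have hι_apply : ∀ (p : ↥S → ℕ) (j : ↥S), ι p ↑j = p j := by
        intro p j
        have := Finsupp.embDomain_apply (Function.Embedding.subtype (· ∈ S))
          (Finsupp.equivFunOnFinite.symm p) j
        simpa [hι] using this
      have hι_inj : Function.Injective ι :=
        (Finsupp.embDomain_injective _).comp (Equiv.injective _)
      have hgι : ∀ p : ↥S → ℕ, g (ι p) = ∏ j : ↥S, f ↑j (p j) := by
        intro p
        rw [hgS S _ (hι_supp p), ← Finset.prod_coe_sort S (fun j => f j (ι p j))]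
        exact Finset.prod_congr rfl fun j _ => by rw [hι_apply]
      calc ∑ p ∈ T, ∏ j : ↥S, f ↑j (p j)
          = ∑ p ∈ T, g (ι p) := Finset.sum_congr rfl fun p _ => (hgι p).symm
        _ = ∑ α ∈ T.image ι, g α :=
            (Finset.sum_image fun p _ q _ hpq => hι_inj hpq).symm
        _ ≤ b := hball _
    have htend : Filter.Tendsto (fun S : Finset ℕ => Real.exp (∑ j ∈ S, x j))
        Filter.atTop (nhds (Real.exp A)) :=
      (Real.continuous_exp.continuousAt.tendsto.comp hA)
    exact le_of_tendsto htend (Filter.Eventually.of_forall hSb)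

/- STATEMENT 1: If F = ∑_j |h_j|² on V (h_j holomorphic, locally uniform
convergence), then e^F = ∑_α |h^α|²/α! over multi-indices α of finite support,
so e^F − 1 is again a convergent sum of squared moduli of holomorphic functions. -/
theorem stmt1 (m : ℕ) (V : Set (Fin m → ℂ)) (hV : IsOpen V)
    (F : (Fin m → ℂ) → ℝ) (h : ℕ → (Fin m → ℂ) → ℂ)
    (hhol : ∀ j, DifferentiableOn ℂ (h j) V)
    (hF : ∀ z ∈ V, F z = ∑' j, ‖h j z‖ ^ 2)
    (hloc : TendstoLocallyUniformlyOn
      (fun (s : Finset ℕ) z => ∑ j ∈ s, ‖h j z‖ ^ 2) F Filter.atTop V) :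
    ∀ z ∈ V,
      (Summable fun α : ℕ →₀ ℕ =>
        (∏ j ∈ α.support, ‖h j z‖ ^ (α j)) ^ 2
          / (∏ j ∈ α.support, Nat.factorial (α j) : ℝ)) ∧
      Real.exp (F z) = ∑' α : ℕ →₀ ℕ,
        (∏ j ∈ α.support, ‖h j z‖ ^ (α j)) ^ 2
          / (∏ j ∈ α.support, Nat.factorial (α j) : ℝ) := by
  intro z hz
  have hA : HasSum (fun j => ‖h j z‖ ^ 2) (F z) := hloc.tendsto_at hz
  have key := myKey_hasSum (fun j => ‖(h j) z‖ ^ 2) (fun j => sq_nonneg _) hA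
  have heq : (fun α : ℕ →₀ ℕ =>
      (∏ j ∈ α.support, ‖h j z‖ ^ (α j)) ^ 2
        / (∏ j ∈ α.support, Nat.factorial (α j) : ℝ))
      = fun α : ℕ →₀ ℕ =>
        ∏ j ∈ α.support, ((‖h j z‖ ^ 2) ^ (α j) / ((α j).factorial : ℝ)) := by
    funext α
    rw [Finset.prod_div_distrib]
    congr 1
    rw [← Finset.prod_pow]
    exact Finset.prod_congr rfl fun j _ => by
      rw [← pow_mul, ← pow_mul, Nat.mul_comm]
  rw [heq]
  exact ⟨key.summable, key.tsum_eq.symm⟩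
end

section
/- Let D_q(z₀, z) = |z₀ + ε|^{2c} e^{c ψ(z)} − ε^c (z₀ + ε)^c − ε^c (\bar{z₀} + ε)^c + ε^{2c}, where ε > 0, c > 0, and ψ is smooth with ψ(0) = 0. Then the mixed second derivative ∂²/∂z₀∂\bar{z₀} of e^{D_q(z₀,z)} − 1 evaluated at z₀ = 0 equals c² ε^{2c−2} e^{D_q(0,z)} ( ε^{2c} (e^{cψ(z)} − 1)² + e^{cψ(z)} ). -/
/- STATEMENT 4: With D_q(z₀,z) = |z₀+ε|^{2c} e^{cψ(z)} − ε^c (z₀+ε)^c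
− ε^c (conj z₀+ε)^c + ε^{2c}, the mixed Wirtinger derivative
∂²/∂z₀∂̄z₀ (e^{D_q}−1) at z₀ = 0 equals
c² ε^{2c−2} e^{D_q(0,z)} (ε^{2c}(e^{cψ(z)}−1)² + e^{cψ(z)}).
The mixed Wirtinger derivative is computed by polarization: e^{D_q(z₀,z)} is
H(z₀, conj z₀) where H(w,v) = exp((w+ε)^c (v+ε)^c e^{cψ} − ε^c(w+ε)^c
− ε^c(v+ε)^c + ε^{2c}) is holomorphic in each of w, v separately
((w+ε)^c denoting the principal branch, real positive at w = 0), and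
∂²/∂z₀∂̄z₀ e^{D_q} |₀ = ∂_w ∂_v H |₍₀,₀₎.  A := e^{cψ(z)}. -/
theorem stmt4 (c ε : ℝ) (hc : 0 < c) (hε : 0 < ε) (ψz : ℝ)
    (A : ℂ) (hA : A = Complex.exp (c * ψz))
    (H : ℂ → ℂ → ℂ)
    (hH : H = fun w v => Complex.exp
      ((w + ε) ^ (c : ℂ) * (v + ε) ^ (c : ℂ) * A
        - ((ε : ℂ) ^ (c : ℂ)) * (w + ε) ^ (c : ℂ)
        - ((ε : ℂ) ^ (c : ℂ)) * (v + ε) ^ (c : ℂ)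
        + (ε : ℂ) ^ ((2 * c : ℝ) : ℂ))) :
    deriv (fun w => deriv (fun v => H w v) 0) 0
      = (c : ℂ) ^ 2 * ((ε ^ (2 * c - 2) : ℝ) : ℂ)
        * Complex.exp (((ε ^ (2 * c) : ℝ) : ℂ) * (A - 1))
        * (((ε ^ (2 * c) : ℝ) : ℂ) * (A - 1) ^ 2 + A) := by
  set E : ℂ := (ε : ℂ) ^ (c : ℂ) with hE
  set D : ℂ := (c : ℂ) * (ε : ℂ) ^ ((c : ℂ) - 1) with hD
  have hεne : (ε : ℂ) ≠ 0 := by exact_mod_cast hε.ne'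
  have hslit : (ε : ℂ) ∈ Complex.slitPlane := by
    rw [Complex.mem_slitPlane_iff]; left; simpa using hε
  -- derivative of x ↦ (x+ε)^c at 0
  have hpow : HasDerivAt (fun x : ℂ => (x + ε) ^ (c : ℂ)) D 0 := by
    have h := HasDerivAt.cpow_const (c := (c : ℂ))
      ((hasDerivAt_id (0 : ℂ)).add_const (ε : ℂ)) (by simpa using hslit)
    simpa [hD] using h
  have hE2 : ((ε ^ (2 * c) : ℝ) : ℂ) = E * E := by
    rw [Complex.ofReal_cpow hε.le, hE]
    rw [show ((2 * c : ℝ) : ℂ) = (c : ℂ) + (c : ℂ) by push_cast; ring,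
      Complex.cpow_add _ _ hεne]
  have hD2 : D * D = (c : ℂ) ^ 2 * ((ε ^ (2 * c - 2) : ℝ) : ℂ) := by
    rw [Complex.ofReal_cpow hε.le, hD]
    rw [show ((2 * c - 2 : ℝ) : ℂ) = ((c : ℂ) - 1) + ((c : ℂ) - 1) by push_cast; ring,
      Complex.cpow_add _ _ hεne]
    ring
  -- inner derivative, for every w
  have hInner : ∀ w : ℂ, deriv (fun v => H w v) 0
      = Complex.exp ((w + ε) ^ (c : ℂ) * E * (A - 1))
        * (((w + ε) ^ (c : ℂ) * A - E) * D) := by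
    intro w
    have h1 : HasDerivAt (fun v : ℂ =>
        (w + ε) ^ (c : ℂ) * (v + ε) ^ (c : ℂ) * A
          - E * (w + ε) ^ (c : ℂ) - E * (v + ε) ^ (c : ℂ)
          + (ε : ℂ) ^ ((2 * c : ℝ) : ℂ))
        ((w + ε) ^ (c : ℂ) * D * A - E * D) 0 := by
      have h2 : HasDerivAt (fun v : ℂ =>
          (w + ε) ^ (c : ℂ) * (v + ε) ^ (c : ℂ) * A)
          ((w + ε) ^ (c : ℂ) * D * A) 0 := by
        simpa [mul_assoc, mul_comm, mul_left_comm] using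
          ((hpow.const_mul ((w + ε) ^ (c : ℂ))).mul_const A)
      have h3 := hpow.const_mul E
      simpa using ((h2.sub_const (E * (w + ε) ^ (c : ℂ))).sub h3).add_const
        ((ε : ℂ) ^ ((2 * c : ℝ) : ℂ))
    have h4 := h1.cexp
    rw [hH]
    have := h4.deriv
    rw [this]
    have hEE : (ε : ℂ) ^ ((2 * c : ℝ) : ℂ) = E * E :=
      (Complex.ofReal_cpow hε.le _).symm.trans hE2
    simp only [zero_add]
    have harg : (w + ε) ^ (c : ℂ) * E * A - E * (w + ε) ^ (c : ℂ) - E * E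
        + (ε : ℂ) ^ ((2 * c : ℝ) : ℂ) = (w + ε) ^ (c : ℂ) * E * (A - 1) := by
      rw [hEE]; ring
    rw [harg]; ring
  have hfun : (fun w => deriv (fun v => H w v) 0)
      = fun w => Complex.exp ((w + ε) ^ (c : ℂ) * E * (A - 1))
        * (((w + ε) ^ (c : ℂ) * A - E) * D) := funext hInner
  rw [hfun]
  -- outer derivative
  have h5 : HasDerivAt (fun w : ℂ => Complex.exp ((w + ε) ^ (c : ℂ) * E * (A - 1)))
      (Complex.exp (E * E * (A - 1)) * (D * E * (A - 1))) 0 := by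
    have := ((hpow.mul_const E).mul_const (A - 1)).cexp
    simpa [mul_assoc, mul_comm, mul_left_comm] using this
  have h6 : HasDerivAt (fun w : ℂ => ((w + ε) ^ (c : ℂ) * A - E) * D)
      (D * A * D) 0 := by
    simpa [mul_assoc, mul_comm, mul_left_comm] using
      ((hpow.mul_const A).sub_const E).mul_const D
  have h7 := (show HasDerivAt (fun w : ℂ => Complex.exp ((w + ε) ^ (c : ℂ) * E * (A - 1)) * (((w + ε) ^ (c : ℂ) * A - E) * D)) _ 0 from h5.mul h6).deriv
  rw [h7]
  simp only [zero_add]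
  rw [← hE2, hE, ← Complex.ofReal_cpow hε.le]
  have hEA : ((ε ^ c : ℝ) : ℂ) = E := (Complex.ofReal_cpow hε.le _)
  rw [hEA]
  rw [hE2]
  have : Complex.exp (E * E * (A - 1)) * (D * E * (A - 1)) * ((E * A - E) * D)
      + Complex.exp (E * E * (A - 1)) * (D * A * D)
      = (D * D) * Complex.exp (E * E * (A - 1)) * ((E * E) * (A - 1) ^ 2 + A) := by
    ring
  rw [this, hD2]
end
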